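/- If f is a real polynomial of degree n with nonnegative coefficients that is palindromic (f(x) = x^n f(1/x)) and real-rooted, then f is γ-positive: there exist nonnegative reals γ_0,...,γ_{⌊n/2⌋} with f(x) = ∑_{i≥0} γ_i x^i (1+x)^{n−2i}. -/

import Mathlib

/-- A real polynomial is real-rooted if all of its complex roots are real. -/
def RealRooted (p : Polynomial ℝ) : Prop :=
  ∀ z : ℂ, (p.map (algebraMap ℝ ℂ)).IsRoot z → z.im = 0

open Polynomial Finset

private lemma reverse_linear : (X + 1 : ℝ[X]).reverse = X + 1 := by
  have h1 : (X + 1 : ℝ[X]).natDegree = 1 := by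
    simpa using natDegree_X_add_C (1 : ℝ)
  ext i
  rw [reverse, h1, coeff_reflect]
  match i with
  | 0 => rw [revAt_le (by norm_num : (0:ℕ) ≤ 1)]; simp [coeff_one]
  | 1 => rw [revAt_le (by norm_num : (1:ℕ) ≤ 1)]; simp [coeff_one]
  | (k+2) =>
    have h2 : revAt 1 (k+2) = k+2 := revAt_eq_self_of_lt (by omega)
    rw [h2]

private lemma reverse_quad (b : ℝ) :
    (X ^ 2 + C b * X + 1 : ℝ[X]).reverse = X ^ 2 + C b * X + 1 := by
  have h1 : (X ^ 2 + C b * X + 1 : ℝ[X]).natDegree = 2 := by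
    have := natDegree_quadratic (a := (1:ℝ)) (b := b) (c := 1) one_ne_zero
    simpa using this
  have c0 : (X ^ 2 + C b * X + 1 : ℝ[X]).coeff 0 = 1 := by
    simp [coeff_one]
  have c1 : (X ^ 2 + C b * X + 1 : ℝ[X]).coeff 1 = b := by
    simp [coeff_one]
  have c2 : (X ^ 2 + C b * X + 1 : ℝ[X]).coeff 2 = 1 := by
    simp [coeff_one]
  ext i
  rw [reverse, h1, coeff_reflect]
  match i with
  | 0 =>
    rw [revAt_le (by norm_num : (0:ℕ) ≤ 2)]
    norm_num [c0, c2]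
  | 1 =>
    rw [revAt_le (by norm_num : (1:ℕ) ≤ 2)]
  | 2 =>
    rw [revAt_le (by norm_num : (2:ℕ) ≤ 2)]
    norm_num [c0, c2]
  | (k+3) =>
    have h2 : revAt 2 (k+3) = k+3 := revAt_eq_self_of_lt (by omega)
    rw [h2]

private lemma key : ∀ n : ℕ, ∀ f : Polynomial ℝ, f ≠ 0 → f.natDegree = n →
    0 < f.leadingCoeff → RealRooted f → (∀ x : ℝ, f.IsRoot x → x < 0) →
    f.reverse = f →
    ∃ γ : ℕ → ℝ, (∀ i, 0 ≤ γ i) ∧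
      f = ∑ i ∈ Finset.range (n / 2 + 1), C (γ i) * X ^ i * (1 + X) ^ (n - 2 * i) := by
  intro n
  induction n using Nat.strong_induction_on with
  | _ n ih =>
  intro f hf0 hdeg hlc hrr hneg hrev
  rcases Nat.eq_zero_or_pos n with hn | hn
  · subst hn
    refine ⟨fun _ => f.coeff 0, ?_, ?_⟩
    · intro i
      have : f.coeff 0 = f.leadingCoeff := by rw [leadingCoeff, hdeg]
      rw [this]; exact le_of_lt hlc
    · rw [Finset.sum_range_one]
      simp only [pow_zero, mul_one, Nat.zero_sub, Nat.mul_zero]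
      exact eq_C_of_natDegree_eq_zero hdeg
  · -- find a real root
    have hmapne : f.map (algebraMap ℝ ℂ) ≠ 0 :=
      (Polynomial.map_ne_zero_iff (algebraMap ℝ ℂ).injective).mpr hf0
    have hmapdeg : (f.map (algebraMap ℝ ℂ)).natDegree = n := by
      rw [natDegree_map (algebraMap ℝ ℂ), hdeg]
    have hdpos : (f.map (algebraMap ℝ ℂ)).degree ≠ 0 := by
      rw [degree_eq_natDegree hmapne, hmapdeg]
      intro h
      have : n = 0 := by exact_mod_cast h
      omega
    obtain ⟨z, hz⟩ := IsAlgClosed.exists_root _ hdpos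
    have hzim : z.im = 0 := hrr z hz
    set r := z.re with hrdef
    have hzre : ((r : ℝ) : ℂ) = z := Complex.ext rfl (by simp [hzim])
    have hroot : f.IsRoot r := by
      have h1 : (f.map (algebraMap ℝ ℂ)).eval (algebraMap ℝ ℂ r) =
          algebraMap ℝ ℂ (f.eval r) := by
        rw [eval_map, eval₂_at_apply]
      have h2 : algebraMap ℝ ℂ r = z := by simpa using hzre
      rw [h2, hz] at h1
      have h3 : ((f.eval r : ℝ) : ℂ) = 0 := by simpa using h1.symm
      exact_mod_cast h3
    have hrneg : r < 0 := hneg r hroot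
    have hrne : r ≠ 0 := ne_of_lt hrneg
    by_cases hr1 : r = -1
    · -- linear factor X + 1
      set g := f /ₘ (X - C r) with hgdef
      have hXr : (X - C r : ℝ[X]) = X + 1 := by
        rw [hr1, map_neg, C_1, sub_neg_eq_add]
      have hfe : (X + 1) * g = f := by
        rw [← hXr]
        exact mul_divByMonic_eq_iff_isRoot.mpr hroot
      have hX1ne : (X + 1 : ℝ[X]) ≠ 0 := by
        intro h
        have := congrArg (fun p => Polynomial.coeff p 0) h
        simp at this
      have hg0 : g ≠ 0 := by
        intro h; rw [h, mul_zero] at hfe; exact hf0 hfe.symm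
      have hnd1 : (X + 1 : ℝ[X]).natDegree = 1 := by
        simpa using natDegree_X_add_C (1 : ℝ)
      have hgdeg : g.natDegree = n - 1 := by
        have := natDegree_mul hX1ne hg0
        rw [hfe, hdeg, hnd1] at this
        omega
      have hm : (X + 1 : ℝ[X]).Monic := by
        simpa using monic_X_add_C (1 : ℝ)
      have hglc : 0 < g.leadingCoeff := by
        have h := leadingCoeff_mul (X + 1 : ℝ[X]) g
        rw [hfe, hm.leadingCoeff, one_mul] at h
        rwa [h] at hlc
      have hgrr : RealRooted g := by
        intro w hw
        apply hrr w
        have h : f.map (algebraMap ℝ ℂ) = (X + 1 : ℝ[X]).map (algebraMap ℝ ℂ) *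
            g.map (algebraMap ℝ ℂ) := by rw [← Polynomial.map_mul, hfe]
        rw [IsRoot, h, eval_mul, hw, mul_zero]
      have hgneg : ∀ x : ℝ, g.IsRoot x → x < 0 := by
        intro x hx
        apply hneg x
        rw [IsRoot, ← hfe, eval_mul, hx, mul_zero]
      have hgrev : g.reverse = g := by
        have h1 : f.reverse = (X + 1) * g.reverse := by
          rw [← hfe, reverse_mul_of_domain, reverse_linear]
        rw [hrev, ← hfe] at h1
        exact (mul_left_cancel₀ hX1ne h1).symm
      obtain ⟨δ, hδ0, hδ⟩ := ih (n - 1) (by omega) g hg0 hgdeg hglc hgrr hgneg hgrev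
      refine ⟨fun i => if i ≤ (n-1)/2 then δ i else 0, ?_, ?_⟩
      · intro i; dsimp only; split_ifs with h
        · exact hδ0 i
        · exact le_refl 0
      · beta_reduce
        have hsub : Finset.range ((n-1)/2 + 1) ⊆ Finset.range (n/2 + 1) :=
          Finset.range_subset_range.mpr (by omega)
        rw [← Finset.sum_subset hsub (by
          intro i _ hi
          simp only [Finset.mem_range] at hi
          have h : ¬ i ≤ (n-1)/2 := by omega
          simp [h])]
        have hcong : ∀ i ∈ Finset.range ((n-1)/2 + 1),
            C (if i ≤ (n-1)/2 then δ i else 0) * X ^ i * (1 + X) ^ (n - 2 * i)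
            = (X + 1) * (C (δ i) * X ^ i * (1 + X) ^ (n - 1 - 2 * i)) := by
          intro i hi
          simp only [Finset.mem_range] at hi
          rw [if_pos (by omega)]
          have he : n - 2 * i = (n - 1 - 2 * i) + 1 := by omega
          rw [he, pow_succ]; ring
        rw [Finset.sum_congr rfl hcong, ← Finset.mul_sum, ← hδ, hfe]
    · -- quadratic factor
      have hinv : Invertible r := invertibleOfNonzero hrne
      have hsroot : f.IsRoot r⁻¹ := by
        have h1 := (eval₂_reverse_eq_zero_iff (RingHom.id ℝ) r f).mpr hroot
        rw [hrev, invOf_eq_inv] at h1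
        exact h1
      have hsr : r⁻¹ ≠ r := by
        intro h
        have h2 : r * r = 1 := by
          have h3 := mul_inv_cancel₀ hrne
          rw [h] at h3; linarith
        have : r = -1 := by nlinarith [sq_nonneg (r + 1)]
        exact hr1 this
      set g1 := f /ₘ (X - C r) with hg1def
      have hfe1 : (X - C r) * g1 = f := mul_divByMonic_eq_iff_isRoot.mpr hroot
      have hg1root : g1.IsRoot r⁻¹ := by
        have h := hsroot
        rw [IsRoot, ← hfe1, eval_mul] at h
        simp only [eval_sub, eval_X, eval_C] at h
        rcases mul_eq_zero.mp h with h | h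
        · exact absurd (by linarith : r⁻¹ = r) hsr
        · exact h
      set g := g1 /ₘ (X - C r⁻¹) with hgdef
      have hfe2 : (X - C r⁻¹) * g = g1 := mul_divByMonic_eq_iff_isRoot.mpr hg1root
      set b := -(r + r⁻¹) with hbdef
      have hb : 2 < b := by
        have h1 : r * (r + r⁻¹ + 2) = (r + 1)^2 := by field_simp; ring
        have hne1 : r + 1 ≠ 0 := fun h => hr1 (by linarith)
        have h2 : (0:ℝ) < (r + 1)^2 := by positivity
        by_contra hcon
        push_neg at hcon
        have h3 : 0 ≤ r + r⁻¹ + 2 := by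
          rw [hbdef] at hcon; linarith
        nlinarith [mul_nonneg (neg_nonneg.2 hrneg.le) h3]
      set q : ℝ[X] := X ^ 2 + C b * X + 1 with hqdef
      have hq : q = (X - C r) * (X - C r⁻¹) := by
        have h1 : (X - C r) * (X - C r⁻¹) =
            X ^ 2 + C (-(r + r⁻¹)) * X + C (r * r⁻¹) := by
          simp only [map_neg, map_add, map_mul]
          ring
        rw [h1, mul_inv_cancel₀ hrne, map_one, ← hbdef]
      have hfe : q * g = f := by
        rw [hq, mul_assoc, hfe2, hfe1]
      have hqm : q.Monic := by
        rw [hq]; exact (monic_X_sub_C r).mul (monic_X_sub_C r⁻¹)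
      have hqne : q ≠ 0 := hqm.ne_zero
      have hg0 : g ≠ 0 := by
        intro h; rw [h, mul_zero] at hfe; exact hf0 hfe.symm
      have hqdeg : q.natDegree = 2 := by
        rw [hq, natDegree_mul (X_sub_C_ne_zero r) (X_sub_C_ne_zero r⁻¹),
          natDegree_X_sub_C, natDegree_X_sub_C]
      have hgdeg : g.natDegree = n - 2 := by
        have := natDegree_mul hqne hg0
        rw [hfe, hdeg, hqdeg] at this
        omega
      have hn2 : 2 ≤ n := by
        have := natDegree_mul hqne hg0
        rw [hfe, hdeg, hqdeg] at this
        omega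
      have hglc : 0 < g.leadingCoeff := by
        have h := leadingCoeff_mul q g
        rw [hfe, hqm.leadingCoeff, one_mul] at h
        rwa [h] at hlc
      have hgrr : RealRooted g := by
        intro w hw
        apply hrr w
        have h : f.map (algebraMap ℝ ℂ) = q.map (algebraMap ℝ ℂ) *
            g.map (algebraMap ℝ ℂ) := by rw [← Polynomial.map_mul, hfe]
        rw [IsRoot, h, eval_mul, hw, mul_zero]
      have hgneg : ∀ x : ℝ, g.IsRoot x → x < 0 := by
        intro x hx
        apply hneg x
        rw [IsRoot, ← hfe, eval_mul, hx, mul_zero]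
      have hgrev : g.reverse = g := by
        have h1 : f.reverse = q * g.reverse := by
          rw [← hfe, reverse_mul_of_domain]
          rw [hqdef, reverse_quad, ← hqdef]
        rw [hrev, ← hfe] at h1
        exact (mul_left_cancel₀ hqne h1).symm
      obtain ⟨δ, hδ0, hδ⟩ := ih (n - 2) (by omega) g hg0 hgdeg hglc hgrr hgneg hgrev
      set m := (n - 2) / 2 with hmdef
      have hnm : n / 2 = m + 1 := by omega
      set S : ℝ[X] := ∑ i ∈ Finset.range (m + 1),
        C (δ i) * X ^ i * (1 + X) ^ (n - 2 - 2 * i) with hSdef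
      have hgS : g = S := hδ
      refine ⟨fun i => (if i ≤ m then δ i else 0) +
        (b - 2) * (if 1 ≤ i ∧ i - 1 ≤ m then δ (i-1) else 0), ?_, ?_⟩
      · intro i; dsimp only
        have hb2 : (0:ℝ) ≤ b - 2 := by linarith
        apply add_nonneg
        · split_ifs with h
          · exact hδ0 i
          · exact le_refl 0
        · apply mul_nonneg hb2
          split_ifs with h
          · exact hδ0 (i-1)
          · exact le_refl 0
      · beta_reduce
        rw [hnm]
        have hsplit : ∀ i, C ((if i ≤ m then δ i else 0) +
              (b - 2) * (if 1 ≤ i ∧ i - 1 ≤ m then δ (i-1) else 0)) * X ^ i *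
              (1 + X) ^ (n - 2 * i)
            = C (if i ≤ m then δ i else 0) * X ^ i * (1 + X) ^ (n - 2 * i) +
              C ((b - 2) * (if 1 ≤ i ∧ i - 1 ≤ m then δ (i-1) else 0)) * X ^ i *
              (1 + X) ^ (n - 2 * i) := by
          intro i
          rw [map_add]; ring
        rw [Finset.sum_congr rfl (fun i _ => hsplit i), Finset.sum_add_distrib]
        -- first sum
        have hA : (∑ i ∈ Finset.range (m + 1 + 1),
            C (if i ≤ m then δ i else 0) * X ^ i * (1 + X) ^ (n - 2 * i))
            = (1 + X)^2 * S := by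
          have hsub : Finset.range (m + 1) ⊆ Finset.range (m + 1 + 1) :=
            Finset.range_subset_range.mpr (by omega)
          rw [← Finset.sum_subset hsub (by
            intro i _ hi
            simp only [Finset.mem_range] at hi
            rw [if_neg (by omega : ¬ i ≤ m)]
            simp)]
          rw [hSdef, Finset.mul_sum]
          apply Finset.sum_congr rfl
          intro i hi
          simp only [Finset.mem_range] at hi
          rw [if_pos (by omega)]
          have he : n - 2 * i = (n - 2 - 2 * i) + 2 := by omega
          rw [he, pow_add]; ring
        -- second sum
        have hB : (∑ i ∈ Finset.range (m + 1 + 1),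
            C ((b - 2) * (if 1 ≤ i ∧ i - 1 ≤ m then δ (i-1) else 0)) * X ^ i *
              (1 + X) ^ (n - 2 * i))
            = C (b - 2) * X * S := by
          rw [Finset.sum_range_succ']
          have h0 : C ((b - 2) * (if 1 ≤ 0 ∧ 0 - 1 ≤ m then δ (0-1) else 0)) * X ^ 0 *
              (1 + X) ^ (n - 2 * 0) = 0 := by
            simp
          rw [h0, add_zero, hSdef, Finset.mul_sum]
          apply Finset.sum_congr rfl
          intro i hi
          simp only [Finset.mem_range] at hi
          rw [if_pos (by omega)]
          simp only [Nat.add_sub_cancel]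
          have he : n - 2 * (i + 1) = (n - 2 - 2 * i) := by omega
          rw [he, map_mul, pow_succ]
          ring
        rw [hA, hB, ← hfe, hgS]
        have hqeq : q = (1 + X)^2 + C (b - 2) * X := by
          rw [hqdef, map_sub]
          have h2 : (C (2:ℝ) : ℝ[X]) = 2 := map_ofNat C 2
          rw [h2]; ring
        rw [hqeq]; ring

theorem palindromic_realRooted_gamma_positive (n : ℕ) (f : Polynomial ℝ)
    (hf0 : f ≠ 0) (hdeg : f.natDegree = n)
    (hnonneg : ∀ i, 0 ≤ f.coeff i)
    (hpal : ∀ i ≤ n, f.coeff i = f.coeff (n - i))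
    (hrr : RealRooted f) :
    ∃ γ : ℕ → ℝ, (∀ i, 0 ≤ γ i) ∧
      f = ∑ i ∈ Finset.range (n / 2 + 1),
            Polynomial.C (γ i) * Polynomial.X ^ i * (1 + Polynomial.X) ^ (n - 2 * i) := by
  have hlc : 0 < f.leadingCoeff := by
    have h1 : f.leadingCoeff ≠ 0 := leadingCoeff_ne_zero.mpr hf0
    have h2 : 0 ≤ f.leadingCoeff := by rw [leadingCoeff]; exact hnonneg _
    exact lt_of_le_of_ne h2 (Ne.symm h1)
  have hc0 : 0 < f.coeff 0 := by
    have h1 : f.coeff 0 = f.coeff n := by simpa using hpal 0 (Nat.zero_le n)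
    rw [h1, ← hdeg]
    exact hlc
  have hneg : ∀ x : ℝ, f.IsRoot x → x < 0 := by
    intro x hx
    by_contra h
    push_neg at h
    have hpos : 0 < f.eval x := by
      rw [eval_eq_sum_range]
      have h1 : ∀ i ∈ Finset.range (f.natDegree + 1), 0 ≤ f.coeff i * x ^ i :=
        fun i _ => mul_nonneg (hnonneg i) (pow_nonneg h i)
      have h2 : (0:ℕ) ∈ Finset.range (f.natDegree + 1) := by simp
      calc (0:ℝ) < f.coeff 0 * x ^ 0 := by simpa using hc0
        _ ≤ _ := Finset.single_le_sum h1 h2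
    rw [IsRoot] at hx
    linarith
  have hrev : f.reverse = f := by
    ext i
    rw [coeff_reverse, hdeg]
    by_cases h : i ≤ n
    · rw [revAt_le h, ← hpal i h]
    · have h1 : revAt n i = i := revAt_eq_self_of_lt (by omega)
      rw [h1]
  exact key n f hf0 hdeg hlc hrr hneg hrev
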